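/- As b ↓ 0, A_d(b) := b^{-r} · 2^{-d/b-2r} · Γ_d(1/b+(d+1)/2)/Γ_d(1/(2b)+(d+1)/2)² satisfies A_d(b) = c_d · b^{-r/2} · (1 + O(b)), where c_d = 2^{-d(d+2)/2} π^{-r/2} and r = d(d+1)/2. -/

import Mathlib

open MeasureTheory Matrix Filter Asymptotics

noncomputable section

/-- The multivariate gamma function `Γ_d(α) = π^{d(d-1)/4} ∏_{i=1}^d Γ(α-(i-1)/2)`. -/
def mvGamma (d : ℕ) (α : ℝ) : ℝ :=
  Real.pi ^ ((d : ℝ) * ((d : ℝ) - 1) / 4) * ∏ i : Fin d, Real.Gamma (α - (i : ℝ) / 2)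

/-- The centering constant `A_d(b) = b^{-r} 2^{-d/b-2r} Γ_d(1/b+(d+1)/2)/Γ_d(1/(2b)+(d+1)/2)²`,
with `r = d(d+1)/2`. -/
def Acst (d : ℕ) (b : ℝ) : ℝ :=
  b ^ (-((d : ℝ) * ((d : ℝ) + 1) / 2)) * (2 : ℝ) ^ (-(d : ℝ) / b - (d : ℝ) * ((d : ℝ) + 1)) *
    (mvGamma d (1 / b + ((d : ℝ) + 1) / 2) / (mvGamma d (1 / (2 * b) + ((d : ℝ) + 1) / 2)) ^ 2)

namespace AcstAux

open Real

/-- The Gamma ratio `Γ(x+t)/(Γ(x) x^t)`. -/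
def Rf (t x : ℝ) : ℝ := Gamma (x + t) / (Gamma x * x ^ t)

/-- `f = 1 + O(1/x)` at infinity. -/
def Pp (f : ℝ → ℝ) : Prop := (fun x => f x - 1) =O[atTop] (fun x : ℝ => x⁻¹)

lemma Pp.one : Pp (fun _ => 1) := by
  simp only [Pp, sub_self]
  exact isBigO_zero _ _

lemma Pp.congr {f g : ℝ → ℝ} (h : Pp f) (he : g =ᶠ[atTop] f) : Pp g := by
  refine IsBigO.congr' (show (fun x => f x - 1) =O[atTop] (fun x : ℝ => x⁻¹) from h) ?_
    EventuallyEq.rfl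
  filter_upwards [he] with x hx
  rw [hx]

lemma Pp.tendsto {f : ℝ → ℝ} (h : Pp f) : Tendsto f atTop (nhds 1) := by
  have h0 : Tendsto (fun x => f x - 1) atTop (nhds 0) :=
    h.trans_tendsto tendsto_inv_atTop_zero
  simpa using h0.add_const 1

lemma Pp.isBigO_one {f : ℝ → ℝ} (h : Pp f) : f =O[atTop] (fun _ => (1 : ℝ)) :=
  h.tendsto.isBigO_one ℝ

lemma Pp.mul {f g : ℝ → ℝ} (hf : Pp f) (hg : Pp g) : Pp (fun x => f x * g x) := by
  have h1 : (fun x => (f x - 1) * g x) =O[atTop] (fun x : ℝ => x⁻¹) := by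
    simpa using (show (fun x => f x - 1) =O[atTop] (fun x : ℝ => x⁻¹) from hf).mul
      hg.isBigO_one
  have h2 := h1.add hg
  refine h2.congr_left fun x => ?_
  ring

lemma Pp.inv {f : ℝ → ℝ} (hf : Pp f) : Pp (fun x => (f x)⁻¹) := by
  have hpos : ∀ᶠ x in atTop, 0 < f x :=
    hf.tendsto.eventually (eventually_gt_nhds one_pos)
  have hinv : Tendsto (fun x => (f x)⁻¹) atTop (nhds 1) := by
    simpa using hf.tendsto.inv₀ one_ne_zero
  have h2 : (fun x => 1 - f x) =O[atTop] (fun x : ℝ => x⁻¹) := by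
    have := (show (fun x => f x - 1) =O[atTop] (fun x : ℝ => x⁻¹) from hf).neg_left
    refine this.congr_left fun x => ?_
    ring
  have h1 : (fun x => (1 - f x) * (f x)⁻¹) =O[atTop] (fun x : ℝ => x⁻¹) := by
    simpa using h2.mul (hinv.isBigO_one ℝ)
  refine IsBigO.congr' h1 ?_ (by rfl)
  filter_upwards [hpos] with x hx
  field_simp

lemma Pp.pow {f : ℝ → ℝ} (hf : Pp f) (n : ℕ) : Pp (fun x => f x ^ n) := by
  induction n with
  | zero => simpa using Pp.one
  | succ n ih =>
      have := ih.mul hf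
      refine this.congr (Eventually.of_forall fun x => ?_)
      ring

lemma Pp.div {f g : ℝ → ℝ} (hf : Pp f) (hg : Pp g) : Pp (fun x => f x / g x) := by
  have := hf.mul hg.inv
  refine this.congr (Eventually.of_forall fun x => ?_)
  simp [div_eq_mul_inv]

lemma Pp.prod {ι : Type*} (s : Finset ι) (f : ι → ℝ → ℝ) (h : ∀ i ∈ s, Pp (f i)) :
    Pp (fun x => ∏ i ∈ s, f i x) := by
  classical
  induction s using Finset.induction_on with
  | empty => simpa using Pp.one
  | insert _ _ hni ih =>
      rename_i a s
      have h1 : Pp (f a) := h a (Finset.mem_insert_self a s)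
      have h2 : Pp (fun x => ∏ i ∈ s, f i x) := ih fun i hi => h i (Finset.mem_insert_of_mem hi)
      refine (h1.mul h2).congr (Eventually.of_forall fun x => ?_)
      simp [Finset.prod_insert hni]

lemma Pp.comp_shift {f : ℝ → ℝ} (hf : Pp f) {c : ℝ} (hc : 0 ≤ c) :
    Pp (fun x => f (x + c)) := by
  have ht : Tendsto (fun x : ℝ => x + c) atTop atTop :=
    tendsto_atTop_add_const_right _ c tendsto_id
  have h1 := hf.comp_tendsto ht
  refine IsBigO.trans h1 ?_
  refine IsBigO.of_bound 1 ?_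
  filter_upwards [eventually_ge_atTop 1] with x hx
  have hx0 : (0 : ℝ) < x := by linarith
  rw [one_mul, Real.norm_eq_abs, Real.norm_eq_abs, Function.comp_apply,
    abs_of_nonneg (by positivity), abs_of_nonneg (by positivity)]
  exact inv_anti₀ hx0 (by linarith)

lemma Pp.comp_half {f : ℝ → ℝ} (hf : Pp f) : Pp (fun x => f (x / 2)) := by
  have ht : Tendsto (fun x : ℝ => x / 2) atTop atTop :=
    Tendsto.atTop_div_const two_pos tendsto_id
  have h1 := hf.comp_tendsto ht
  refine IsBigO.trans h1 ?_
  have : (fun x : ℝ => (x / 2)⁻¹) = fun x : ℝ => 2 * x⁻¹ := by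
    funext x
    rw [div_eq_mul_inv, mul_inv, inv_inv, mul_comm]
  rw [Function.comp_def, this]
  simpa using (isBigO_refl (fun x : ℝ => x⁻¹) atTop).const_mul_left 2

/-- auxiliary: `((x+c)/x)^(1/2) = 1 + O(1/x)`. -/
lemma Pp.sqrt_ratio {c : ℝ} (hc : 0 ≤ c) : Pp (fun x => ((x + c) / x) ^ (1/2 : ℝ)) := by
  refine IsBigO.of_bound c ?_
  filter_upwards [eventually_ge_atTop 1] with x hx
  have hx0 : (0 : ℝ) < x := by linarith
  have ht1 : (1 : ℝ) ≤ (x + c) / x := by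
    rw [le_div_iff₀ hx0]; linarith
  have ht0 : (0 : ℝ) < (x + c) / x := by positivity
  have hup : ((x + c) / x) ^ (1/2 : ℝ) ≤ (x + c) / x := by
    calc ((x + c) / x) ^ (1/2 : ℝ) ≤ ((x + c) / x) ^ (1 : ℝ) :=
          rpow_le_rpow_of_exponent_le ht1 (by norm_num)
      _ = (x + c) / x := rpow_one _
  have hlo : (1 : ℝ) ≤ ((x + c) / x) ^ (1/2 : ℝ) :=
    one_le_rpow ht1 (by norm_num)
  rw [Real.norm_eq_abs, Real.norm_eq_abs, abs_of_nonneg (by linarith : (0:ℝ) ≤ _),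
    abs_of_nonneg (inv_nonneg.mpr hx0.le)]
  have : (x + c) / x - 1 = c * x⁻¹ := by field_simp; ring
  calc ((x + c) / x) ^ (1/2 : ℝ) - 1 ≤ (x + c) / x - 1 := by linarith
    _ = c * x⁻¹ := this

/-- Wendel's inequality: `Γ(x+1/2)/(Γ(x)√x) = 1 + O(1/x)`. -/
lemma wendel : Pp (Rf (1/2)) := by
  refine IsBigO.of_bound 1 ?_
  filter_upwards [eventually_ge_atTop 1] with x hx
  have hx0 : (0 : ℝ) < x := by linarith
  have hΓx : 0 < Gamma x := Gamma_pos_of_pos hx0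
  have hxh : (0 : ℝ) < x + 1/2 := by linarith
  have hΓxh : 0 < Gamma (x + 1/2) := Gamma_pos_of_pos hxh
  have hxr : (0 : ℝ) < x ^ (1/2 : ℝ) := rpow_pos_of_pos hx0 _
  -- midpoint log-convexity
  have mid : ∀ u v : ℝ, 0 < u → 0 < v →
      log (Gamma ((u + v) / 2)) ≤ (log (Gamma u) + log (Gamma v)) / 2 := by
    intro u v hu hv
    have h := convexOn_log_Gamma.2 (Set.mem_Ioi.mpr hu) (Set.mem_Ioi.mpr hv)
      (by norm_num : (0:ℝ) ≤ 1/2) (by norm_num : (0:ℝ) ≤ 1/2) (by norm_num)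
    simp only [smul_eq_mul, Function.comp_apply] at h
    calc log (Gamma ((u + v) / 2)) = log (Gamma (1/2 * u + 1/2 * v)) := by ring_nf
      _ ≤ 1/2 * log (Gamma u) + 1/2 * log (Gamma v) := h
      _ = (log (Gamma u) + log (Gamma v)) / 2 := by ring
  -- upper bound
  have hup : Rf (1/2) x ≤ 1 := by
    have h1 := mid x (x + 1) hx0 (by linarith)
    have h2 : Gamma (x + 1) = x * Gamma x := Gamma_add_one (ne_of_gt hx0)
    have h3 : log (Gamma (x + 1/2)) ≤ log (Gamma x) + log x / 2 := by
      have e : (x + (x + 1)) / 2 = x + 1/2 := by ring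
      rw [e] at h1
      rw [h2, log_mul (ne_of_gt hx0) (ne_of_gt hΓx)] at h1
      linarith
    have h4 : Gamma (x + 1/2) ≤ Gamma x * x ^ (1/2 : ℝ) := by
      calc Gamma (x + 1/2) = exp (log (Gamma (x + 1/2))) := (exp_log hΓxh).symm
        _ ≤ exp (log (Gamma x) + log x / 2) := exp_le_exp.mpr h3
        _ = Gamma x * x ^ (1/2 : ℝ) := by
            rw [exp_add, exp_log hΓx, rpow_def_of_pos hx0]
            ring_nf
    rw [Rf, div_le_one (by positivity)]
    exact h4
  -- lower bound
  have hlo : 1 - x⁻¹ ≤ Rf (1/2) x := by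
    have h1 := mid (x + 1/2) (x + 3/2) hxh (by linarith)
    have h2 : Gamma (x + 3/2) = (x + 1/2) * Gamma (x + 1/2) := by
      have := Gamma_add_one (ne_of_gt hxh)
      rw [show x + 1/2 + 1 = x + 3/2 by ring] at this
      exact this
    have h3 : log (Gamma (x + 1)) ≤ log (Gamma (x + 1/2)) + log (x + 1/2) / 2 := by
      have e : (x + 1/2 + (x + 3/2)) / 2 = x + 1 := by ring
      rw [e] at h1
      rw [h2, log_mul (ne_of_gt hxh) (ne_of_gt hΓxh)] at h1
      linarith
    have h4 : x * Gamma x ≤ Gamma (x + 1/2) * (x + 1/2) ^ (1/2 : ℝ) := by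
      have h2' : Gamma (x + 1) = x * Gamma x := Gamma_add_one (ne_of_gt hx0)
      calc x * Gamma x = exp (log (Gamma (x + 1))) := by
            rw [h2', exp_log (by positivity)]
        _ ≤ exp (log (Gamma (x + 1/2)) + log (x + 1/2) / 2) := exp_le_exp.mpr h3
        _ = Gamma (x + 1/2) * (x + 1/2) ^ (1/2 : ℝ) := by
            rw [exp_add, exp_log hΓxh, rpow_def_of_pos hxh]
            ring_nf
    -- scalar inequality
    have hxhr : (0 : ℝ) < (x + 1/2) ^ (1/2 : ℝ) := rpow_pos_of_pos hxh _
    have hs1 : x ^ (1/2 : ℝ) = Real.sqrt x := (sqrt_eq_rpow x).symm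
    have hs2 : (x + 1/2) ^ (1/2 : ℝ) = Real.sqrt (x + 1/2) := (sqrt_eq_rpow _).symm
    have key : (1 - x⁻¹) * (x ^ (1/2 : ℝ) * (x + 1/2) ^ (1/2 : ℝ)) ≤ x := by
      rw [hs1, hs2]
      have hq1 : Real.sqrt x ^ 2 = x := Real.sq_sqrt hx0.le
      have hq2 : Real.sqrt (x + 1/2) ^ 2 = x + 1/2 := Real.sq_sqrt hxh.le
      have hn1 : 0 ≤ Real.sqrt x := Real.sqrt_nonneg _
      have hn2 : 0 ≤ Real.sqrt (x + 1/2) := Real.sqrt_nonneg _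
      have hmean : Real.sqrt x * Real.sqrt (x + 1/2) ≤ x + 1/4 := by
        nlinarith [sq_nonneg (Real.sqrt x - Real.sqrt (x + 1/2))]
      have hinv : x⁻¹ ≤ 1 := by simpa using inv_anti₀ one_pos hx
      have hinv0 : 0 < x⁻¹ := inv_pos.mpr hx0
      have hxx : x⁻¹ * x = 1 := inv_mul_cancel₀ (ne_of_gt hx0)
      have hstep := mul_le_mul_of_nonneg_left hmean (sub_nonneg.mpr hinv)
      nlinarith [hstep, hxx, hinv0]
    have step : (1 - x⁻¹) * (Gamma x * x ^ (1/2 : ℝ)) ≤ Gamma (x + 1/2) := by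
      have h5 : (1 - x⁻¹) * (Gamma x * x ^ (1/2 : ℝ)) * (x + 1/2) ^ (1/2 : ℝ)
          ≤ x * Gamma x := by
        have := mul_le_mul_of_nonneg_right key hΓx.le
        calc (1 - x⁻¹) * (Gamma x * x ^ (1/2 : ℝ)) * (x + 1/2) ^ (1/2 : ℝ)
            = (1 - x⁻¹) * (x ^ (1/2 : ℝ) * (x + 1/2) ^ (1/2 : ℝ)) * Gamma x := by ring
          _ ≤ x * Gamma x := this
      have h6 := h4
      nlinarith [mul_pos hΓxh hxhr]
    rw [Rf, le_div_iff₀ (by positivity)]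
    linarith [step]
  rw [Real.norm_eq_abs, Real.norm_eq_abs, abs_of_nonneg (inv_nonneg.mpr hx0.le), one_mul]
  rw [abs_le]
  constructor <;> linarith

/-- `Γ(x + n/2)/(Γ(x) x^{n/2}) = 1 + O(1/x)` for every `n : ℕ`. -/
lemma Rf_half_nat (n : ℕ) : Pp (Rf ((n : ℝ) / 2)) := by
  induction n with
  | zero =>
      refine Pp.one.congr ?_
      filter_upwards [eventually_ge_atTop 1] with x hx
      have hx0 : (0 : ℝ) < x := by linarith
      have hΓx : Gamma x ≠ 0 := ne_of_gt (Gamma_pos_of_pos hx0)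
      simp [Rf, hΓx]
  | succ n ih =>
      have hc : (0 : ℝ) ≤ (n : ℝ) / 2 := by positivity
      have h := ((wendel.comp_shift hc).mul ih).mul (Pp.sqrt_ratio hc)
      refine h.congr ?_
      filter_upwards [eventually_ge_atTop 1] with x hx
      have hx0 : (0 : ℝ) < x := by linarith
      have hxc : (0 : ℝ) < x + (n : ℝ) / 2 := by positivity
      have hΓ1 : Gamma (x + (n : ℝ) / 2) ≠ 0 := ne_of_gt (Gamma_pos_of_pos hxc)
      have hΓ2 : Gamma x ≠ 0 := ne_of_gt (Gamma_pos_of_pos hx0)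
      simp only [Rf]
      rw [div_rpow hxc.le hx0.le]
      have harg : x + (n : ℝ) / 2 + 1 / 2 = x + ((n : ℕ) + 1 : ℝ) / 2 := by push_cast; ring
      have hexp : x ^ (((n : ℕ) + 1 : ℝ) / 2) = x ^ ((n : ℝ) / 2) * x ^ (1/2 : ℝ) := by
        rw [← rpow_add hx0]; push_cast; ring_nf
      push_cast
      rw [harg] at *
      push_cast at hexp ⊢
      field_simp
      rw [hexp]

lemma sum_fin_cast (d : ℕ) : ∑ i : Fin d, (i : ℝ) = d * (d - 1) / 2 := by
  induction d with
  | zero => simp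
  | succ n ih =>
      rw [Fin.sum_univ_castSucc]
      simp only [Fin.coe_castSucc, Fin.val_last]
      rw [ih]
      push_cast
      ring

lemma sum_a (d : ℕ) : ∑ i : Fin d, ((d : ℝ) + 1 - i) / 2 = d * (d + 3) / 4 := by
  have h := sum_fin_cast d
  have e : ∀ i : Fin d, ((d : ℝ) + 1 - i) / 2 = ((d : ℝ) + 1) / 2 - (i : ℝ) * (1/2) := by
    intro i; ring
  rw [Finset.sum_congr rfl fun i _ => e i, Finset.sum_sub_distrib, Finset.sum_const,
    Finset.card_univ, Fintype.card_fin, ← Finset.sum_mul, h, nsmul_eq_mul]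
  ring

lemma main_Pp (d : ℕ) : Pp (fun x => Acst d x⁻¹ /
    ((2 : ℝ) ^ (-((d : ℝ) * ((d : ℝ) + 2) / 2)) *
      Real.pi ^ (-((d : ℝ) * ((d : ℝ) + 1) / 2 / 2)) *
      (x⁻¹) ^ (-((d : ℝ) * ((d : ℝ) + 1) / 2 / 2)))) := by
  have hG : Pp (fun x => Rf (1/2) (x/2) ^ d *
      ∏ i : Fin d, (Rf (((d : ℝ) + 1 - i) / 2) x / Rf (((d : ℝ) + 1 - i) / 2) (x/2) ^ 2)) := by
    refine (wendel.comp_half.pow d).mul (Pp.prod _ _ fun i _ => ?_)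
    have hle : (i : ℕ) ≤ d + 1 := le_trans i.isLt.le (Nat.le_succ d)
    have hai : ((d : ℝ) + 1 - i) / 2 = ((d + 1 - (i : ℕ) : ℕ) : ℝ) / 2 := by
      rw [Nat.cast_sub hle]
      push_cast
      ring
    rw [hai]
    exact (Rf_half_nat _).div ((Rf_half_nat _).comp_half.pow 2)
  refine hG.congr ?_
  filter_upwards [eventually_ge_atTop 1] with x hx
  have hx0 : (0 : ℝ) < x := by linarith
  have hxi : (0 : ℝ) < x⁻¹ := inv_pos.mpr hx0
  have hx2 : (0 : ℝ) < x / 2 := by linarith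
  set D := (d : ℝ) with hD
  have hargpos : ∀ i : Fin d, (0 : ℝ) < x + (D + 1 - i) / 2 := by
    intro i
    have hi : (i : ℝ) < D := by rw [hD]; exact_mod_cast i.isLt
    linarith
  have harghalf : ∀ i : Fin d, (0 : ℝ) < x / 2 + (D + 1 - i) / 2 := by
    intro i
    have hi : (i : ℝ) < D := by rw [hD]; exact_mod_cast i.isLt
    linarith
  -- rewrite arguments
  have e1 : 1 / x⁻¹ + (D + 1) / 2 = x + (D + 1) / 2 := by rw [one_div, inv_inv]
  have e2 : 1 / (2 * x⁻¹) + (D + 1) / 2 = x / 2 + (D + 1) / 2 := by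
    rw [one_div, mul_inv, inv_inv]
    ring
  -- exp forms of the mvGamma factors
  have hnum : mvGamma d (x + (D + 1) / 2) =
      Real.exp (log π * (D * (D - 1) / 4) +
        ∑ i : Fin d, log (Gamma (x + (D + 1 - i) / 2))) := by
    rw [mvGamma, rpow_def_of_pos pi_pos, exp_add, Real.exp_sum]
    congr 1
    refine Finset.prod_congr rfl fun i _ => ?_
    rw [show x + (D + 1) / 2 - (i : ℝ) / 2 = x + (D + 1 - i) / 2 by ring,
      exp_log (Gamma_pos_of_pos (hargpos i))]
  have hden : mvGamma d (x / 2 + (D + 1) / 2) =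
      Real.exp (log π * (D * (D - 1) / 4) +
        ∑ i : Fin d, log (Gamma (x / 2 + (D + 1 - i) / 2))) := by
    rw [mvGamma, rpow_def_of_pos pi_pos, exp_add, Real.exp_sum]
    congr 1
    refine Finset.prod_congr rfl fun i _ => ?_
    rw [show x / 2 + (D + 1) / 2 - (i : ℝ) / 2 = x / 2 + (D + 1 - i) / 2 by ring,
      exp_log (Gamma_pos_of_pos (harghalf i))]
  -- exp form of the Rf factors
  have hfac : ∀ i : Fin d, Rf ((D + 1 - i) / 2) x / Rf ((D + 1 - i) / 2) (x/2) ^ 2 =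
      Real.exp ((log (Gamma (x + (D + 1 - i) / 2)) - log (Gamma x) - log x * ((D + 1 - i) / 2))
        - 2 * (log (Gamma (x / 2 + (D + 1 - i) / 2)) - log (Gamma (x / 2))
          - log (x / 2) * ((D + 1 - i) / 2))) := by
    intro i
    have hA : Real.exp (log (Gamma (x + (D + 1 - i) / 2)) - log (Gamma x)
        - log x * ((D + 1 - i) / 2)) = Rf ((D + 1 - i) / 2) x := by
      rw [exp_sub, exp_sub, exp_log (Gamma_pos_of_pos (hargpos i)),
        exp_log (Gamma_pos_of_pos hx0), ← rpow_def_of_pos hx0, Rf, div_div]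
    have hB : Real.exp (log (Gamma (x / 2 + (D + 1 - i) / 2)) - log (Gamma (x / 2))
        - log (x / 2) * ((D + 1 - i) / 2)) = Rf ((D + 1 - i) / 2) (x / 2) := by
      rw [exp_sub, exp_sub, exp_log (Gamma_pos_of_pos (harghalf i)),
        exp_log (Gamma_pos_of_pos hx2), ← rpow_def_of_pos hx2, Rf, div_div]
    rw [show (log (Gamma (x + (D + 1 - i) / 2)) - log (Gamma x) - log x * ((D + 1 - i) / 2))
        - 2 * (log (Gamma (x / 2 + (D + 1 - i) / 2)) - log (Gamma (x / 2))
          - log (x / 2) * ((D + 1 - i) / 2))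
      = (log (Gamma (x + (D + 1 - i) / 2)) - log (Gamma x) - log x * ((D + 1 - i) / 2))
        - ((log (Gamma (x / 2 + (D + 1 - i) / 2)) - log (Gamma (x / 2))
          - log (x / 2) * ((D + 1 - i) / 2))
          + (log (Gamma (x / 2 + (D + 1 - i) / 2)) - log (Gamma (x / 2))
          - log (x / 2) * ((D + 1 - i) / 2))) by ring,
      exp_sub, exp_add, hA, hB]
    rw [sq]
  have hRf12 : Rf (1/2) (x/2) =
      Real.exp (log (Gamma (x / 2 + 1 / 2)) - log (Gamma (x / 2)) - log (x / 2) * (1 / 2)) := by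
    rw [exp_sub, exp_sub, exp_log (Gamma_pos_of_pos (by linarith : (0:ℝ) < x / 2 + 1 / 2)),
      exp_log (Gamma_pos_of_pos hx2), ← rpow_def_of_pos hx2, Rf, div_div]
  -- duplication formula in log form
  have hdup : log (Gamma x) = log (Gamma (x / 2)) + log (Gamma (x / 2 + 1 / 2))
      - (1 - x) * log 2 - log π / 2 := by
    have h := Real.Gamma_mul_Gamma_add_half (x / 2)
    rw [show 2 * (x / 2) = x by ring] at h
    have h2pos : (0 : ℝ) < (2:ℝ) ^ (1 - x) := rpow_pos_of_pos two_pos _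
    have hl := congrArg Real.log h
    rw [log_mul (ne_of_gt (Gamma_pos_of_pos hx2))
        (ne_of_gt (Gamma_pos_of_pos (by linarith : (0:ℝ) < x / 2 + 1 / 2))),
      log_mul (ne_of_gt (mul_pos (Gamma_pos_of_pos hx0) h2pos)) (ne_of_gt (sqrt_pos.mpr pi_pos)),
      log_mul (ne_of_gt (Gamma_pos_of_pos hx0)) (ne_of_gt h2pos),
      log_rpow two_pos, log_sqrt pi_pos.le] at hl
    linarith
  have hlhalf : log (x / 2) = log x - log 2 := log_div (ne_of_gt hx0) two_ne_zero
  -- put everything in exp form and compare exponents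
  rw [Acst, e1, e2, hnum, hden, Finset.prod_congr rfl fun i _ => hfac i, hRf12]
  simp only [rpow_def_of_pos hxi, rpow_def_of_pos two_pos, rpow_def_of_pos pi_pos,
    ← Real.exp_sum, ← Real.exp_nat_mul, ← Real.exp_add, ← Real.exp_sub]
  rw [Real.exp_eq_exp]
  have expand : ∀ i : Fin d,
      (log (Gamma (x + (D + 1 - i) / 2)) - log (Gamma x) - log x * ((D + 1 - i) / 2))
        - 2 * (log (Gamma (x / 2 + (D + 1 - i) / 2)) - log (Gamma (x / 2))
          - log (x / 2) * ((D + 1 - i) / 2))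
      = log (Gamma (x + (D + 1 - i) / 2)) + (-2) * log (Gamma (x / 2 + (D + 1 - i) / 2))
        + (- log (Gamma x) + 2 * log (Gamma (x / 2)))
        + (2 * log (x / 2) - log x) * ((D + 1 - i) / 2) := fun i => by ring
  rw [Finset.sum_congr rfl fun i _ => expand i]
  have hsa := sum_a d
  rw [← hD] at hsa
  simp only [Finset.sum_add_distrib, Finset.sum_const, Finset.card_univ, Fintype.card_fin,
    nsmul_eq_mul, ← Finset.mul_sum]
  rw [hsa, hdup, hlhalf, Real.log_inv]
  simp only [div_inv_eq_mul]
  ring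

end AcstAux

/-- As `b ↓ 0`, `A_d(b) = c_d b^{-r/2} (1 + O(b))` with `c_d = 2^{-d(d+2)/2} π^{-r/2}`
and `r = d(d+1)/2`. -/
theorem Acst_asymptotic (d : ℕ) :
    (fun b : ℝ =>
        Acst d b /
            ((2 : ℝ) ^ (-((d : ℝ) * ((d : ℝ) + 2) / 2)) *
              Real.pi ^ (-((d : ℝ) * ((d : ℝ) + 1) / 2 / 2)) *
              b ^ (-((d : ℝ) * ((d : ℝ) + 1) / 2 / 2))) - 1)
      =O[nhdsWithin 0 (Set.Ioi (0 : ℝ))] (fun b => b) := by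
  have h : (fun x : ℝ => Acst d x⁻¹ /
      ((2 : ℝ) ^ (-((d : ℝ) * ((d : ℝ) + 2) / 2)) *
        Real.pi ^ (-((d : ℝ) * ((d : ℝ) + 1) / 2 / 2)) *
        (x⁻¹) ^ (-((d : ℝ) * ((d : ℝ) + 1) / 2 / 2))) - 1)
      =O[atTop] (fun x : ℝ => x⁻¹) := AcstAux.main_Pp d
  have h3 := h.comp_tendsto tendsto_inv_nhdsGT_zero
  refine h3.congr (fun b => ?_) (fun b => ?_)
  · simp [Function.comp]
  · simp
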